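/- Let γ < 0 and k a positive integer. Then (1/√k)·∑_{i=1}^{k-1} exp(2iγ/√k) → 1/(2|γ_n|) in the sense that for a sequence γ_n < 0 with γ_n·√k_n → -∞ and γ_n → 0, the quantity |γ_n|·(1/√{k_n})·∑_{i=1}^{k_n-1} exp(2iγ_n/√{k_n}) tends to 1/2 as n → ∞. -/

import Mathlib

open Filter in
theorem geom_sum_variance_limit (γ : ℕ → ℝ) (k : ℕ → ℕ)
    (hγneg : ∀ n, γ n < 0) (hγ0 : Tendsto γ atTop (nhds 0))
    (hkpos : ∀ n, 0 < k n) (hk : Tendsto k atTop atTop)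
    (hkγ : Tendsto (fun n => γ n * Real.sqrt (k n)) atTop atBot) :
    Tendsto (fun n => |γ n| * ((1 / Real.sqrt (k n)) *
        ∑ i ∈ Finset.Icc 1 (k n - 1), Real.exp (2 * i * γ n / Real.sqrt (k n))))
      atTop (nhds (1/2)) := by
  set s : ℕ → ℝ := fun n => Real.sqrt (k n) with hs_def
  have hs : ∀ n, (0:ℝ) < s n := fun n => Real.sqrt_pos.2 (by exact_mod_cast hkpos n)
  have hss : ∀ n, s n * s n = (k n : ℝ) := fun n => Real.mul_self_sqrt (by positivity)
  have hs1 : ∀ n, (1:ℝ) ≤ s n := by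
    intro n
    have h1 : (1:ℝ) ≤ (k n : ℝ) := by exact_mod_cast hkpos n
    nlinarith [hss n, (hs n).le]
  set x : ℕ → ℝ := fun n => -2 * γ n / s n with hx_def
  have hxpos : ∀ n, 0 < x n := fun n => div_pos (by nlinarith [hγneg n]) (hs n)
  set r : ℕ → ℝ := fun n => Real.exp (2 * γ n / s n) with hr_def
  have hrpos : ∀ n, 0 < r n := fun n => Real.exp_pos _
  have hrlt : ∀ n, r n < 1 := fun n =>
    Real.exp_lt_one_iff.2 (div_neg_of_neg_of_pos (by linarith [hγneg n]) (hs n))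
  have h1r : ∀ n, (1:ℝ) - r n ≠ 0 := fun n => by linarith [hrlt n]
  have hr1 : ∀ n, r n ≠ 1 := fun n => ne_of_lt (hrlt n)
  have hr_eq : ∀ n, r n = Real.exp (-(x n)) := by
    intro n
    simp only [hr_def, hx_def]
    congr 1
    ring
  -- x tends to 0
  have hx0 : Tendsto x atTop (nhds 0) := by
    refine squeeze_zero_norm (a := fun n => 2 * |γ n|) (fun n => ?_) ?_
    · have hxv : x n = -2 * γ n / s n := rfl
      rw [Real.norm_eq_abs, hxv, abs_div, abs_of_pos (hs n)]
      have habs : |(-2 : ℝ) * γ n| = 2 * |γ n| := by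
        rw [abs_mul]; norm_num
      rw [habs]
      exact div_le_self (by positivity) (hs1 n)
    · have h2 : Tendsto (fun n => 2 * |γ n|) atTop (nhds (2 * |(0:ℝ)|)) :=
        (hγ0.abs.const_mul 2)
      simpa using h2
  -- r tends to 1
  have hr_t : Tendsto r atTop (nhds 1) := by
    have h1 : Tendsto (fun n => Real.exp (-(x n))) atTop (nhds (Real.exp (-0))) :=
      (Real.continuous_exp.tendsto _).comp hx0.neg
    rw [neg_zero, Real.exp_zero] at h1
    exact Tendsto.congr (fun n => (hr_eq n).symm) h1
  -- r^k tends to 0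
  have hrk_eq : ∀ n, r n ^ k n = Real.exp (2 * (γ n * s n)) := by
    intro n
    rw [hr_def, ← Real.exp_nat_mul]
    congr 1
    have h := hss n
    field_simp [(hs n).ne']
    linear_combination (-(γ n)) * h
  have hrk_t : Tendsto (fun n => r n ^ k n) atTop (nhds 0) := by
    have h2 : Tendsto (fun n => 2 * (γ n * s n)) atTop atBot := by
      exact Tendsto.const_mul_atBot (by norm_num) hkγ
    have := Real.tendsto_exp_atBot.comp h2
    refine Tendsto.congr (fun n => (hrk_eq n).symm) this
  -- sum formula
  have hsum : ∀ n, ∑ i ∈ Finset.Icc 1 (k n - 1), Real.exp (2 * i * γ n / s n)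
      = (r n - r n ^ k n) / (1 - r n) := by
    intro n
    have hIcc : Finset.Icc 1 (k n - 1) = Finset.Ico 1 (k n) := by
      rw [← Finset.Ico_add_one_right_eq_Icc, Nat.sub_add_cancel (show 1 ≤ k n by have := hkpos n; omega)]
    have hterm : ∀ i : ℕ, Real.exp (2 * i * γ n / s n) = r n ^ i := by
      intro i
      rw [hr_def, ← Real.exp_nat_mul]
      congr 1
      ring
    rw [hIcc]
    simp only [hterm]
    have h0 : ∑ i ∈ Finset.Ico 0 (k n), r n ^ i
        = r n ^ 0 + ∑ i ∈ Finset.Ico 1 (k n), r n ^ i :=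
      Finset.sum_eq_sum_Ico_succ_bot (hkpos n) _
    have hg : ∑ i ∈ Finset.Ico 0 (k n), r n ^ i = (r n ^ k n - 1) / (r n - 1) := by
      rw [← Finset.range_eq_Ico]
      exact geom_sum_eq (hr1 n) (k n)
    rw [hg, pow_zero] at h0
    have hS : ∑ i ∈ Finset.Ico 1 (k n), r n ^ i = (r n ^ k n - 1) / (r n - 1) - 1 := by
      linarith
    rw [hS]
    have hr1' : r n - 1 ≠ 0 := sub_ne_zero.2 (hr1 n)
    field_simp [hr1', h1r n]
    ring
  -- A tends to 1
  have hA : Tendsto (fun n => x n / (1 - r n)) atTop (nhds 1) := by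
    have hderiv : HasDerivAt (fun t : ℝ => 1 - Real.exp (-t)) 1 0 := by
      have h1 : HasDerivAt (fun t : ℝ => Real.exp (-t)) (-1) 0 := by
        have := (Real.hasDerivAt_exp (-(0:ℝ))).comp 0 (hasDerivAt_neg (0:ℝ))
        simpa [Function.comp_def] using this
      have := (hasDerivAt_const (0:ℝ) (1:ℝ)).sub h1
      simpa [Pi.sub_def] using this
    rw [hasDerivAt_iff_tendsto_slope] at hderiv
    have hx0' : Tendsto x atTop (nhdsWithin 0 {(0:ℝ)}ᶜ) := by
      refine tendsto_nhdsWithin_of_tendsto_nhds_of_eventually_within _ hx0 ?_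
      exact Eventually.of_forall fun n => (hxpos n).ne'
    have hslope : Tendsto (fun n => slope (fun t : ℝ => 1 - Real.exp (-t)) 0 (x n))
        atTop (nhds 1) := hderiv.comp hx0'
    have hslope_eq : ∀ n, slope (fun t : ℝ => 1 - Real.exp (-t)) 0 (x n)
        = (1 - r n) / x n := by
      intro n
      rw [slope_def_field, hr_eq n]
      simp
    have hinv : Tendsto (fun n => ((1 - r n) / x n)⁻¹) atTop (nhds 1⁻¹) := by
      refine Tendsto.inv₀ ?_ (by norm_num)
      exact Tendsto.congr (fun n => hslope_eq n) hslope
    simp only [inv_one] at hinv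
    refine Tendsto.congr (fun n => ?_) hinv
    rw [inv_div]
  -- B tends to 1
  have hB : Tendsto (fun n => r n - r n ^ k n) atTop (nhds 1) := by
    have := hr_t.sub hrk_t
    simpa using this
  -- conclude
  have hfinal : Tendsto (fun n => (x n / (1 - r n)) * (r n - r n ^ k n) / 2)
      atTop (nhds (1/2)) := by
    have := (hA.mul hB).div_const 2
    simpa using this
  refine Tendsto.congr (fun n => ?_) hfinal
  rw [hsum n, abs_of_neg (hγneg n)]
  have hsne : s n ≠ 0 := (hs n).ne'
  have h1rne := h1r n
  rw [hx_def]
  rw [show Real.sqrt (k n) = s n from rfl]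
  field_simp
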